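/- Let 𝒜 be a linear order with no maximum and 𝒰 a tails ultrafilter over ⟨A, <⟩. Then cof(𝒜) < cof(A^A/𝒰). Consequently, if moreover |A| = cof(𝒜), then |A| < |A^A/𝒰|. -/
import Mathlib


universe u

/-- The cofinality of a relation `r`: the least cardinality of an `r`-cofinal subset. -/
noncomputable def rcofin {α : Type u} (r : α → α → Prop) : Cardinal.{u} :=
  ⨅ S : {S : Set α // ∀ a : α, ∃ b ∈ S, r a b}, Cardinal.mk S.1

section Aux

instance rcofin_nonempty_index {A : Type u} [Preorder A] :
    Nonempty {S : Set A // ∀ a : A, ∃ b ∈ S, a ≤ b} :=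
  ⟨⟨Set.univ, fun a => ⟨a, Set.mem_univ a, le_rfl⟩⟩⟩

variable {A : Type u} [LinearOrder A]

lemma rcofin_le_of_cofinal {S : Set A} (hS : ∀ a : A, ∃ b ∈ S, a ≤ b) :
    rcofin ((· ≤ ·) : A → A → Prop) ≤ Cardinal.mk S :=
  ciInf_le' (fun S : {S : Set A // ∀ a : A, ∃ b ∈ S, a ≤ b} => Cardinal.mk S.1) ⟨S, hS⟩

lemma bounded_of_mk_lt_rcofin {T : Set A}
    (h : Cardinal.mk T < rcofin ((· ≤ ·) : A → A → Prop)) :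
    ∃ a : A, ∀ t ∈ T, t < a := by
  by_contra hc
  push_neg at hc
  exact absurd (rcofin_le_of_cofinal fun a => hc a) h.not_ge

lemma exists_cofinal_mk_eq :
    ∃ S : Set A, (∀ a : A, ∃ b ∈ S, a ≤ b) ∧
      Cardinal.mk S = rcofin ((· ≤ ·) : A → A → Prop) := by
  have hmem : rcofin ((· ≤ ·) : A → A → Prop) ∈
      Set.range (fun S : {S : Set A // ∀ a : A, ∃ b ∈ S, a ≤ b} => Cardinal.mk S.1) :=
    csInf_mem (Set.range_nonempty _)
  obtain ⟨S, hS⟩ := hmem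
  exact ⟨S.1, S.2, hS⟩

lemma exists_strictMono_cofinal [Nonempty A] [NoMaxOrder A] :
    ∃ h : (rcofin ((· ≤ ·) : A → A → Prop)).ord.ToType → A,
      (∀ ζ ξ, ζ < ξ → h ζ < h ξ) ∧ ∀ a : A, ∃ ξ, a ≤ h ξ := by
  classical
  set lam := rcofin ((· ≤ ·) : A → A → Prop) with hlam
  obtain ⟨S, hScof, hSmk⟩ := exists_cofinal_mk_eq (A := A)
  have hSne : S.Nonempty := by
    obtain ⟨a⟩ := ‹Nonempty A›
    obtain ⟨b, hb, _⟩ := hScof a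
    exact ⟨b, hb⟩
  haveI : Nonempty S := hSne.to_subtype
  have hcard : Cardinal.mk S ≤ Cardinal.mk lam.ord.ToType := by
    rw [Cardinal.mk_toType, Cardinal.card_ord, hSmk]
  obtain ⟨ι⟩ := Cardinal.le_def _ _ |>.mp hcard
  set e : lam.ord.ToType → S := Function.invFun ι with he
  have hesurj : Function.Surjective e := Function.invFun_surjective ι.injective
  have key : ∀ (ξ : lam.ord.ToType) (ih : ∀ ζ, ζ < ξ → A),
      ∃ a : A, (∀ ζ (hζ : ζ < ξ), ih ζ hζ < a) ∧ (e ξ : A) ≤ a := by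
    intro ξ ih
    have hV : Cardinal.mk (Set.range fun p : Set.Iio ξ => ih p.1 p.2) < lam := by
      exact lt_of_le_of_lt Cardinal.mk_range_le (Cardinal.mk_Iio_ord_toType ξ)
    obtain ⟨b, hb⟩ := bounded_of_mk_lt_rcofin hV
    refine ⟨max b (e ξ : A), fun ζ hζ => lt_of_lt_of_le ?_ (le_max_left _ _),
      le_max_right _ _⟩
    exact hb _ ⟨⟨ζ, hζ⟩, rfl⟩
  let h : lam.ord.ToType → A :=
    WellFounded.fix wellFounded_lt (fun ξ ih => Classical.choose (key ξ ih))
  have hfix : ∀ ξ, h ξ = Classical.choose (key ξ fun ζ _ => h ζ) := fun ξ =>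
    WellFounded.fix_eq _ _ ξ
  have hspec : ∀ ξ, (∀ ζ (hζ : ζ < ξ), h ζ < h ξ) ∧ (e ξ : A) ≤ h ξ := by
    intro ξ
    rw [hfix ξ]
    exact Classical.choose_spec (key ξ fun ζ _ => h ζ)
  refine ⟨h, fun ζ ξ hζξ => (hspec ξ).1 ζ hζξ, fun a => ?_⟩
  obtain ⟨b, hb, hab⟩ := hScof a
  obtain ⟨ξ, hξ⟩ := hesurj ⟨b, hb⟩
  have hbe : (e ξ : A) = b := congrArg Subtype.val hξ
  exact ⟨ξ, hab.trans (hbe ▸ (hspec ξ).2)⟩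

end Aux

/-- If `𝒜` has no maximum and `𝒰` is a tails ultrafilter over `A`, then
`cof(𝒜) < cof(A^A/𝒰)`; consequently, if `|A| = cof(𝒜)`, then `|A| < |A^A/𝒰|`. -/
theorem stmt13 {A : Type u} [LinearOrder A] [NoMaxOrder A] (U : Ultrafilter A)
    (htails : ∀ k : A, {j : A | k ≤ j} ∈ U) :
    rcofin ((· ≤ ·) : A → A → Prop) <
        rcofin ((· ≤ ·) : Filter.Germ (U : Filter A) A → Filter.Germ (U : Filter A) A → Prop) ∧
      (Cardinal.mk A = rcofin ((· ≤ ·) : A → A → Prop) →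
        Cardinal.mk A < Cardinal.mk (Filter.Germ (U : Filter A) A)) := by
  classical
  haveI : Nonempty A := Filter.nonempty_of_neBot (U : Filter A)
  set lam := rcofin ((· ≤ ·) : A → A → Prop) with hlam
  obtain ⟨h, hmono, hcof⟩ := exists_strictMono_cofinal (A := A)
  have hrep : ∀ q : Filter.Germ (U : Filter A) A, ∃ f : A → A,
      (f : Filter.Germ (U : Filter A) A) = q := fun q =>
    Filter.Germ.inductionOn q fun f => ⟨f, rfl⟩
  have main : ∀ F : {F : Set (Filter.Germ (U : Filter A) A) // ∀ x, ∃ y ∈ F, x ≤ y},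
      lam < Cardinal.mk F.1 := by
    rintro ⟨F, hFcof⟩
    by_contra hle
    push_neg at hle
    haveI : Nonempty F := by
      obtain ⟨y, hy, -⟩ := hFcof (((fun a => a) : A → A) : Filter.Germ (U : Filter A) A)
      exact ⟨⟨y, hy⟩⟩
    have hcard : Cardinal.mk F ≤ Cardinal.mk lam.ord.ToType := by
      rw [Cardinal.mk_toType, Cardinal.card_ord]; exact hle
    obtain ⟨ι⟩ := Cardinal.le_def _ _ |>.mp hcard
    set e : lam.ord.ToType → F := Function.invFun ι with he
    have hesurj : Function.Surjective e := Function.invFun_surjective ι.injective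
    set fcn : lam.ord.ToType → (A → A) := fun ξ => Classical.choose (hrep (e ξ : _)) with hfcn
    have hfcnspec : ∀ ξ, ((fcn ξ : A → A) : Filter.Germ (U : Filter A) A) = (e ξ : _) :=
      fun ξ => Classical.choose_spec (hrep (e ξ : _))
    have hg : ∀ a : A, ∃ b : A, ∀ ξ, h ξ ≤ a → fcn ξ a < b := by
      intro a
      obtain ⟨a', ha'⟩ := exists_gt a
      obtain ⟨ξ₀, hξ₀⟩ := hcof a'
      have hsub : {ξ | h ξ ≤ a} ⊆ Set.Iio ξ₀ := by
        intro ξ hξ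
        by_contra hlt
        simp only [Set.mem_Iio, not_lt] at hlt
        have hh : h ξ₀ ≤ h ξ := by
          rcases eq_or_lt_of_le hlt with rfl | hlt'
          · exact le_rfl
          · exact (hmono _ _ hlt').le
        exact absurd (hξ₀.trans (hh.trans hξ)) (not_le.mpr ha')
      have hVlt : Cardinal.mk ((fun ξ => fcn ξ a) '' {ξ | h ξ ≤ a}) < lam := by
        calc Cardinal.mk ((fun ξ => fcn ξ a) '' {ξ | h ξ ≤ a})
            ≤ Cardinal.mk {ξ | h ξ ≤ a} := Cardinal.mk_image_le
          _ ≤ Cardinal.mk (Set.Iio ξ₀) := Cardinal.mk_le_mk_of_subset hsub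
          _ < lam := Cardinal.mk_Iio_ord_toType ξ₀
      obtain ⟨b, hb⟩ := bounded_of_mk_lt_rcofin hVlt
      exact ⟨b, fun ξ hξ => hb _ ⟨ξ, hξ, rfl⟩⟩
    choose g hgspec using hg
    obtain ⟨y, hyF, hgy⟩ := hFcof ((g : A → A) : Filter.Germ (U : Filter A) A)
    obtain ⟨ξ, hξ⟩ := hesurj ⟨y, hyF⟩
    have hlt : ((fcn ξ : A → A) : Filter.Germ (U : Filter A) A) < (g : A → A) := by
      rw [Filter.Germ.coe_lt]
      exact Filter.mem_of_superset (htails (h ξ)) fun a ha => hgspec a ξ ha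
    have hy : ((fcn ξ : A → A) : Filter.Germ (U : Filter A) A) = y :=
      (hfcnspec ξ).trans (congrArg Subtype.val hξ)
    rw [hy] at hlt
    exact (hlt.trans_le hgy).false
  refine ⟨?_, ?_⟩
  · have hsucc : Order.succ lam ≤
        rcofin ((· ≤ ·) : Filter.Germ (U : Filter A) A → Filter.Germ (U : Filter A) A → Prop) :=
      le_ciInf fun F => Order.succ_le_of_lt (main F)
    exact lt_of_lt_of_le (Order.lt_succ lam) hsucc
  · intro hA
    have h1 : rcofin ((· ≤ ·) : Filter.Germ (U : Filter A) A → Filter.Germ (U : Filter A) A → Prop)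
        ≤ Cardinal.mk (Filter.Germ (U : Filter A) A) := by
      have := rcofin_le_of_cofinal (A := Filter.Germ (U : Filter A) A)
        (S := Set.univ) (fun x => ⟨x, Set.mem_univ x, le_rfl⟩)
      simpa using this
    calc Cardinal.mk A = lam := hA
      _ < _ := lt_of_lt_of_le (Order.lt_succ lam)
          (le_ciInf fun F => Order.succ_le_of_lt (main F))
      _ ≤ _ := h1
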